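/- The purification map purify p = fun u => (print p u).map Prod.fst is a monadic profunctor homomorphism from biparsers to partial functions u → Option v: purify (return x) = fun _ => some x; purify (p >>= k) u = (purify p u).bind (fun y => purify (k y) u); and purify (comap f p) = fun u => (f u).bind (purify p). -/

import Mathlib

/-- A biparser: a parser together with a printer. -/
structure Bp (u v : Type) where
  parse : List Char → v × List Char
  print : u → Option (v × List Char)

def Bp.ret {u v : Type} (x : v) : Bp u v :=
  ⟨fun s => (x, s), fun _ => some (x, [])⟩

def Bp.bind {u v w : Type} (p : Bp u v) (k : v → Bp u w) : Bp u w :=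
  ⟨fun s => (k (p.parse s).1).parse (p.parse s).2,
   fun x => (p.print x).bind (fun vs =>
     ((k vs.1).print x).map (fun ws => (ws.1, vs.2 ++ ws.2)))⟩

def Bp.comap {u u' v : Type} (f : u → Option u') (p : Bp u' v) : Bp u v :=
  ⟨p.parse, fun x => (f x).bind p.print⟩

/-- Weak backward round tripping. -/
def WeakBackward {u v : Type} (p : Bp u v) : Prop :=
  ∀ (x : u) (y : v) (s s' : List Char),
    p.print x = some (y, s) → p.parse (s ++ s') = (y, s')

/-- Weak forward round tripping. -/
def WeakForward {u v : Type} (p : Bp u v) : Prop :=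
  ∀ (x : u) (y : v) (s0 s1 s01 : List Char),
    p.parse s01 = (y, s1) → p.print x = some (y, s0) → s01 = s0 ++ s1

/-- The purification of a biparser: its printer with the output string discarded. -/
def purify {u v : Type} (p : Bp u v) : u → Option v :=
  fun x => (p.print x).map Prod.fst

theorem purify_homomorphism (u u' v w : Type) :
    (∀ (x : v), purify (Bp.ret (u := u) x) = fun _ => some x) ∧
    (∀ (p : Bp u v) (k : v → Bp u w) (x : u),
      purify (Bp.bind p k) x = (purify p x).bind (fun y => purify (k y) x)) ∧
    (∀ (f : u → Option u') (p : Bp u' v),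
      purify (Bp.comap f p) = fun x => (f x).bind (purify p)) := by
  refine ⟨fun x => rfl, fun p k x => ?_, fun f p => ?_⟩
  · simp [purify, Bp.bind]
    cases p.print x with
    | none => rfl
    | some vs =>
      simp [Option.map_bind]
      cases (k vs.1).print x <;> rfl
  · funext x
    simp [purify, Bp.comap, Option.bind_map]
    rfl
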